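/- Every directed partial order D of cardinality ω₁ is Tukey equivalent to 1, to ω, to ω₁, or satisfies ω×ω₁ ≤_T D ≤_T [ω₁]^{<ω}. -/
import Mathlib


/-- `S` is cofinal in a preordered type. -/
def IsCofinalIn {γ : Type*} [Preorder γ] (S : Set γ) : Prop :=
  ∀ x : γ, ∃ y ∈ S, x ≤ y

/-- `TukeyLE β γ` means `β ≤_T γ`: some `φ : γ → β` maps cofinal sets to cofinal
sets. -/
def TukeyLE (β γ : Type*) [Preorder β] [Preorder γ] : Prop :=
  ∃ φ : γ → β, ∀ S : Set γ, IsCofinalIn S → IsCofinalIn (φ '' S)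

/-- Tukey equivalence. -/
def TukeyEquiv (β γ : Type*) [Preorder β] [Preorder γ] : Prop :=
  TukeyLE β γ ∧ TukeyLE γ β

/-- The ordinal `ω₁` as an ordered type. -/
abbrev Omega1Type : Type 1 := {o : Ordinal // o < (Cardinal.aleph 1).ord}

namespace TukeyAux

open Cardinal

theorem mk_omega1 : Cardinal.mk Omega1Type = Cardinal.aleph 1 := by
  have : #Omega1Type = #(Set.Iio ((Cardinal.aleph 1).ord)) := rfl
  rw [this, Ordinal.mk_Iio_ordinal, Cardinal.card_ord, Cardinal.lift_aleph,
    Ordinal.lift_one]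

theorem countable_Iic (α : Omega1Type) : (Set.Iic α).Countable := by
  rw [Cardinal.countable_iff_lt_aleph_one]
  have h1 : Order.succ α.val < (Cardinal.aleph 1).ord :=
    (Cardinal.isSuccLimit_ord (Cardinal.aleph0_le_aleph 1)).succ_lt α.2
  have h2 : #(Set.Iio (Order.succ α.val)) < Cardinal.aleph 1 := by
    rw [Ordinal.mk_Iio_ordinal]
    calc Cardinal.lift.{1} (Order.succ α.val).card
        < Cardinal.lift.{1} (Cardinal.aleph 1) := Cardinal.lift_lt.mpr (Cardinal.lt_ord.mp h1)
      _ = Cardinal.aleph 1 := by rw [Cardinal.lift_aleph, Ordinal.lift_one]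
  refine lt_of_le_of_lt (Cardinal.mk_le_of_injective (f := fun β : Set.Iic α =>
    (⟨β.val.val, Set.mem_Iio.mpr (lt_of_le_of_lt (Subtype.coe_le_coe.mpr
      (Set.mem_Iic.mp β.2)) (Order.lt_succ _))⟩ :
      Set.Iio (Order.succ α.val))) ?_) h2
  intro a b hab
  simp only [Subtype.mk.injEq] at hab
  exact Subtype.ext (Subtype.ext hab)

/-- Uncountable subsets of `ω₁` are cofinal. -/
theorem cofinal_of_uncountable {A : Set Omega1Type} (hA : ¬ A.Countable) :
    IsCofinalIn A := by
  by_contra h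
  unfold IsCofinalIn at h
  push_neg at h
  obtain ⟨x, hx⟩ := h
  refine hA (Set.Countable.mono ?_ (countable_Iic x))
  intro y hy
  exact Set.mem_Iic.mpr (le_of_lt (hx y hy))

section Directed

variable {D : Type*} [PartialOrder D]

/-- Building a monotone chain dominating a given sequence. -/
theorem exists_chain (hdir : ∀ x y : D, ∃ z : D, x ≤ z ∧ y ≤ z) (u : ℕ → D) :
    ∃ x : ℕ → D, Monotone x ∧ ∀ n, u n ≤ x n := by
  let x : ℕ → D := fun n => Nat.rec (u 0) (fun n xn => (hdir xn (u (n + 1))).choose) n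
  have hstep : ∀ n, x n ≤ x (n + 1) ∧ u (n + 1) ≤ x (n + 1) := fun n =>
    (hdir (x n) (u (n + 1))).choose_spec
  refine ⟨x, monotone_nat_of_le_succ (fun n => (hstep n).1), ?_⟩
  intro n
  cases n with
  | zero => exact le_refl _
  | succ m => exact (hstep m).2

/-- From a monotone unbounded chain, a rank function into `ℕ`. -/
theorem exists_natRank (x : ℕ → D) (hmono : Monotone x)
    (hunb : ∀ d : D, ∃ n, ¬ x n ≤ d) :
    ∃ ψ : D → ℕ, ∀ n d, x n ≤ d → n ≤ ψ d := by
  refine ⟨fun d => sSup {n | x n ≤ d}, fun n d hnd => ?_⟩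
  obtain ⟨m, hm⟩ := hunb d
  have hbdd : ∀ k ∈ {n | x n ≤ d}, k ≤ m := by
    intro k hk
    by_contra hkm
    exact hm (le_trans (hmono (le_of_not_ge hkm)) hk)
  exact le_csSup ⟨m, hbdd⟩ hnd

end Directed

end TukeyAux

/-- Every directed partial order of cardinality `ω₁` is Tukey equivalent to `1`, `ω`,
`ω₁`, or lies Tukey between `ω × ω₁` and `[ω₁]^{<ω}`. -/
theorem tukey_classification_omega1 (D : Type*) [PartialOrder D]
    (hdir : ∀ x y : D, ∃ z : D, x ≤ z ∧ y ≤ z)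
    (hcard : Cardinal.mk D = Cardinal.aleph 1) :
    TukeyEquiv D PUnit ∨ TukeyEquiv D ℕ ∨ TukeyEquiv D Omega1Type ∨
      (TukeyLE (ℕ × Omega1Type) D ∧ TukeyLE D (Finset Omega1Type)) := by
  classical
  have hne : Nonempty D := Cardinal.mk_ne_zero_iff.mp (by
    rw [hcard]; exact ne_of_gt (Cardinal.aleph_pos 1))
  -- a bijection between `D` and `ω₁`
  have hDequiv : Nonempty (D ≃ Omega1Type) := by
    rw [← Cardinal.lift_mk_eq']
    rw [hcard, TukeyAux.mk_omega1, Cardinal.lift_aleph, Cardinal.lift_aleph,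
      Ordinal.lift_one, Ordinal.lift_one]
  obtain ⟨e⟩ := hDequiv
  by_cases hP1 : ∃ t : D, ∀ d : D, d ≤ t
  · -- greatest element: `D ≡_T 1`
    obtain ⟨t, ht⟩ := hP1
    left
    constructor
    · refine ⟨fun _ => t, fun S hS => ?_⟩
      intro d
      obtain ⟨y, hy, -⟩ := hS PUnit.unit
      exact ⟨t, ⟨y, hy, rfl⟩, ht d⟩
    · refine ⟨fun _ => PUnit.unit, fun S hS => ?_⟩
      intro x
      obtain ⟨y, hy, -⟩ := hS t
      exact ⟨PUnit.unit, ⟨y, hy, rfl⟩, le_of_eq rfl⟩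
  by_cases hP2 : ∃ C : Set D, C.Countable ∧ IsCofinalIn C
  · -- countable cofinality, no top: `D ≡_T ω`
    obtain ⟨C, hCc, hCcof⟩ := hP2
    obtain ⟨d₀⟩ := hne
    obtain ⟨c₀, hc₀, -⟩ := hCcof d₀
    obtain ⟨u, hu⟩ := hCc.exists_eq_range ⟨c₀, hc₀⟩
    obtain ⟨x, hxmono, hxu⟩ := TukeyAux.exists_chain hdir u
    have hxcof : ∀ d : D, ∃ n, d ≤ x n := by
      intro d
      obtain ⟨c, hc, hdc⟩ := hCcof d
      rw [hu] at hc
      obtain ⟨n, rfl⟩ := hc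
      exact ⟨n, le_trans hdc (hxu n)⟩
    have hxunb : ∀ d : D, ∃ n, ¬ x n ≤ d := by
      intro d
      by_contra h
      push_neg at h
      refine hP1 ⟨d, fun a => ?_⟩
      obtain ⟨n, hn⟩ := hxcof a
      exact le_trans hn (h n)
    right; left
    constructor
    · -- D ≤_T ℕ
      refine ⟨x, fun S hS => ?_⟩
      intro d
      obtain ⟨m, hm⟩ := hxcof d
      obtain ⟨n, hn, hmn⟩ := hS m
      exact ⟨x n, ⟨n, hn, rfl⟩, le_trans hm (hxmono hmn)⟩
    · -- ℕ ≤_T D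
      obtain ⟨ψ, hψ⟩ := TukeyAux.exists_natRank x hxmono hxunb
      refine ⟨ψ, fun S hS => ?_⟩
      intro n
      obtain ⟨d, hd, hnd⟩ := hS (x n)
      exact ⟨ψ d, ⟨d, hd, rfl⟩, hψ n d hnd⟩
  -- from now on, every cofinal subset of `D` is uncountable
  have huncof : ∀ S : Set D, IsCofinalIn S → ¬ (e '' S).Countable := by
    intro S hS h
    refine hP2 ⟨S, ?_, hS⟩
    have : S = e.symm '' (e '' S) := by
      rw [← Set.image_comp]
      simp
    rw [this]
    exact h.image _
  have hOm : TukeyLE Omega1Type D := by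
    refine ⟨fun d => e d, fun S hS => ?_⟩
    have := TukeyAux.cofinal_of_uncountable (huncof S hS)
    intro α
    obtain ⟨β, hβ, hαβ⟩ := this α
    obtain ⟨d, hd, rfl⟩ := hβ
    exact ⟨e d, ⟨d, hd, rfl⟩, hαβ⟩
  by_cases hP3 : ∀ A : Set D, A.Countable → ∃ b : D, ∀ a ∈ A, a ≤ b
  · -- every countable set bounded: `D ≡_T ω₁`
    right; right; left
    refine ⟨⟨fun α => (hP3 (e.symm '' Set.Iic α)
      ((TukeyAux.countable_Iic α).image _)).choose, fun S hS => ?_⟩, hOm⟩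
    intro d
    obtain ⟨γ, hγ, hγ'⟩ := hS (e d)
    refine ⟨_, ⟨γ, hγ, rfl⟩, ?_⟩
    have := (hP3 (e.symm '' Set.Iic γ)
      ((TukeyAux.countable_Iic γ).image _)).choose_spec
    have hd : d ∈ e.symm '' Set.Iic γ := ⟨e d, Set.mem_Iic.mpr hγ', by simp⟩
    exact this d hd
  · -- last case: `ω × ω₁ ≤_T D ≤_T [ω₁]^{<ω}`
    right; right; right
    push_neg at hP3
    obtain ⟨A, hAc, hAunb'⟩ := hP3
    have hAne : A.Nonempty := by
      obtain ⟨d₀⟩ := hne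
      obtain ⟨a, ha, -⟩ := hAunb' d₀
      exact ⟨a, ha⟩
    obtain ⟨u, hu⟩ := hAc.exists_eq_range hAne
    obtain ⟨x, hxmono, hxu⟩ := TukeyAux.exists_chain hdir u
    have hxunb : ∀ d : D, ∃ n, ¬ x n ≤ d := by
      intro d
      obtain ⟨a, ha, had⟩ := hAunb' d
      rw [hu] at ha
      obtain ⟨n, rfl⟩ := ha
      exact ⟨n, fun h => had (le_trans (hxu n) h)⟩
    obtain ⟨ψ, hψ⟩ := TukeyAux.exists_natRank x hxmono hxunb
    constructor
    · -- ω × ω₁ ≤_T D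
      refine ⟨fun d => (ψ d, e d), fun S hS => ?_⟩
      rintro ⟨n, α⟩
      -- the set of elements of S above x n is cofinal
      have hSn : IsCofinalIn {d | d ∈ S ∧ x n ≤ d} := by
        intro y
        obtain ⟨z, hz1, hz2⟩ := hdir (x n) y
        obtain ⟨d, hd, hzd⟩ := hS z
        exact ⟨d, ⟨hd, le_trans hz1 hzd⟩, le_trans hz2 hzd⟩
      have := TukeyAux.cofinal_of_uncountable (huncof _ hSn)
      obtain ⟨β, hβ, hαβ⟩ := this α
      obtain ⟨d, ⟨hdS, hdx⟩, rfl⟩ := hβ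
      exact ⟨(ψ d, e d), ⟨d, hdS, rfl⟩, ⟨hψ n d hdx, hαβ⟩⟩
    · -- D ≤_T [ω₁]^{<ω}
      have : IsDirected D (· ≤ ·) := ⟨hdir⟩
      refine ⟨fun F => (Finset.exists_le (F.image e.symm)).choose, fun S hS => ?_⟩
      intro d
      obtain ⟨F, hF, hdF⟩ := hS {e d}
      refine ⟨_, ⟨F, hF, rfl⟩, ?_⟩
      have hmem : e d ∈ F := hdF (Finset.mem_singleton_self _)
      have := (Finset.exists_le (F.image e.symm)).choose_spec
      have h2 := this (e.symm (e d)) (Finset.mem_image_of_mem _ hmem)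
      simpa using h2
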